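/- Consider the event-triggered closed loop with q > λ/(2ε). Then for all t ∈ [0, F), where F is the supremum of the event times, it holds that d(t)² ≤ −γ m(t) and m(t) < 0. -/

import Mathlib

open Real Set Filter MeasureTheory intervalIntegral

noncomputable section

/-- The entire function `G(s) = ∑ sⁿ/(n!·(n+1)!)`. -/
def Gfun (s : ℝ) : ℝ := ∑' n : ℕ, s ^ n / ((n.factorial : ℝ) * ((n + 1).factorial : ℝ))

/-- Backstepping control kernel `K`. -/
def Kker (ε lam x y : ℝ) : ℝ := -(lam / (2 * ε)) * y * Gfun (lam * (x ^ 2 - y ^ 2) / (4 * ε))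

/-- Inverse control kernel `L`. -/
def Lker (ε lam x y : ℝ) : ℝ := -(lam / (2 * ε)) * y * Gfun (-(lam * (x ^ 2 - y ^ 2)) / (4 * ε))

/-- Observer kernel `P`. -/
def Pker (ε lam x y : ℝ) : ℝ := -(lam / (2 * ε)) * x * Gfun (lam * (y ^ 2 - x ^ 2) / (4 * ε))

/-- Inverse observer kernel `Q`. -/
def Qker (ε lam x y : ℝ) : ℝ := -(lam / (2 * ε)) * x * Gfun (-(lam * (y ^ 2 - x ^ 2)) / (4 * ε))

/-- Observer gain `p₁(x) = -εq·P(x,1) - ε·P_y(x,1)`. -/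
def p1fun (ε lam q x : ℝ) : ℝ :=
  -(ε * q) * Pker ε lam x 1 - ε * deriv (fun y => Pker ε lam x y) 1

/-- Control gain `k(y) = r·K(1,y) + K_x(1,y)` with `r = q - λ/(2ε)`. -/
def kfun (ε lam q y : ℝ) : ℝ :=
  (q - lam / (2 * ε)) * Kker ε lam 1 y + deriv (fun x => Kker ε lam x y) 1

/-- `g(x) = p₁(x) - ∫₀ˣ K(x,y)p₁(y) dy`. -/
def gfun (ε lam q x : ℝ) : ℝ :=
  p1fun ε lam q x - ∫ y in (0:ℝ)..x, Kker ε lam x y * p1fun ε lam q y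

/-- The `L²(0,1)` norm. -/
def L2norm (f : ℝ → ℝ) : ℝ := Real.sqrt (∫ x in (0:ℝ)..1, f x ^ 2)


/-- The sampled-data (or event-triggered) closed-loop system: the plant `u` and the
observer `û` satisfy, between consecutive update times `t_j`, the reaction-diffusion
PDEs with Robin boundary actuation driven by the held input
`U_j = ∫₀¹ k(y)û(y,t_j)dy`; both are continuous in `t` into `L²(0,1)` and classical
(C¹ in `(x,t)`, C² in `x`) away from the update times. -/
def ClosedLoopSol (ε lam q : ℝ) (tseq : ℕ → ℝ) (u uh : ℝ → ℝ → ℝ) : Prop :=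
  -- continuity of `t ↦ u[t]` and `t ↦ û[t]` into `L²(0,1)`
  (∀ t₀ ≥ (0:ℝ), Tendsto (fun τ => ∫ x in (0:ℝ)..1, (u x τ - u x t₀) ^ 2)
      (nhdsWithin t₀ (Set.Ici 0)) (nhds 0)) ∧
  (∀ t₀ ≥ (0:ℝ), Tendsto (fun τ => ∫ x in (0:ℝ)..1, (uh x τ - uh x t₀) ^ 2)
      (nhdsWithin t₀ (Set.Ici 0)) (nhds 0)) ∧
  -- C¹ regularity in `(x,t)` away from the update times
  ContDiffOn ℝ 1 (fun p : ℝ × ℝ => u p.1 p.2)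
    (Set.Icc 0 1 ×ˢ {t : ℝ | 0 < t ∧ ∀ j, t ≠ tseq j}) ∧
  ContDiffOn ℝ 1 (fun p : ℝ × ℝ => uh p.1 p.2)
    (Set.Icc 0 1 ×ˢ {t : ℝ | 0 < t ∧ ∀ j, t ≠ tseq j}) ∧
  -- C² regularity in `x`
  (∀ t > (0:ℝ), ContDiffOn ℝ 2 (fun x => u x t) (Set.Icc 0 1)) ∧
  (∀ t > (0:ℝ), ContDiffOn ℝ 2 (fun x => uh x t) (Set.Icc 0 1)) ∧
  -- the plant PDE `u_t = ε u_xx + λ u`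
  (∀ t : ℝ, 0 < t → (∀ j, t ≠ tseq j) → ∀ x ∈ Set.Ioo (0:ℝ) 1,
    deriv (fun τ => u x τ) t
      = ε * deriv (deriv (fun ξ => u ξ t)) x + lam * u x t) ∧
  -- the observer PDE `û_t = ε û_xx + λ û + p₁(x)(u(1,t) - û(1,t))`
  (∀ t : ℝ, 0 < t → (∀ j, t ≠ tseq j) → ∀ x ∈ Set.Ioo (0:ℝ) 1,
    deriv (fun τ => uh x τ) t
      = ε * deriv (deriv (fun ξ => uh ξ t)) x + lam * uh x t
        + p1fun ε lam q x * (u 1 t - uh 1 t)) ∧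
  -- boundary conditions on each `(t_j, t_{j+1}]`
  (∀ j : ℕ, ∀ t ∈ Set.Ioc (tseq j) (tseq (j + 1)),
    u 0 t = 0 ∧ uh 0 t = 0 ∧
    deriv (fun ξ => u ξ t) 1 + q * u 1 t
      = (∫ y in (0:ℝ)..1, kfun ε lam q y * uh y (tseq j)) ∧
    deriv (fun ξ => uh ξ t) 1 + q * uh 1 t
      = (∫ y in (0:ℝ)..1, kfun ε lam q y * uh y (tseq j))
        + lam / (2 * ε) * (u 1 t - uh 1 t))

/-- The event-triggered closed loop: the sampled-data closed loop together with the
input holding error `d`, the backstepping target states `ŵ`, `w̃`, the dynamic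
variable `m` solving `ṁ = -ηm + ρd² - β₁‖ŵ[t]‖² - β₂ŵ(1,t)² - β₃w̃(1,t)²` with
`m(0) < 0`, and the event times generated by the dynamic triggering rule
`t_{j+1} = inf{t > t_j : d(t)² > -γ m(t)}`. -/
def EventTriggeredLoop (ε lam q η γ ρ β₁ β₂ β₃ : ℝ) (tseq : ℕ → ℝ)
    (u uh : ℝ → ℝ → ℝ) (d m : ℝ → ℝ) (wh wt : ℝ → ℝ → ℝ) : Prop :=
  ClosedLoopSol ε lam q tseq u uh ∧
  -- the input holding error
  (∀ j : ℕ, ∀ t ∈ Set.Ico (tseq j) (tseq (j + 1)),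
    d t = ∫ y in (0:ℝ)..1, kfun ε lam q y * (uh y (tseq j) - uh y t)) ∧
  -- the backstepping target states
  (∀ x t : ℝ, wh x t = uh x t - ∫ y in (0:ℝ)..x, Kker ε lam x y * uh y t) ∧
  (∀ x t : ℝ, wt x t
    = (u x t - uh x t) + ∫ y in x..(1:ℝ), Qker ε lam x y * (u y t - uh y t)) ∧
  -- the dynamic variable of the event trigger
  Continuous m ∧ m 0 < 0 ∧
  (∀ j : ℕ, ∀ t ∈ Set.Ioo (tseq j) (tseq (j + 1)),
    HasDerivAt m (-η * m t + ρ * d t ^ 2 - β₁ * L2norm (fun x => wh x t) ^ 2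
      - β₂ * wh 1 t ^ 2 - β₃ * wt 1 t ^ 2) t) ∧
  -- the event-triggering rule
  tseq 0 = 0 ∧ StrictMono tseq ∧
  (∀ j : ℕ, {t : ℝ | tseq j < t ∧ d t ^ 2 > -γ * m t}.Nonempty ∧
    tseq (j + 1) = sInf {t : ℝ | tseq j < t ∧ d t ^ 2 > -γ * m t})

/-- `L̃ = 1 + (∫₀¹∫₀ˣ L(x,y)² dy dx)^{1/2}`. -/
def Ltilde (ε lam : ℝ) : ℝ :=
  1 + Real.sqrt (∫ x in (0:ℝ)..1, ∫ y in (0:ℝ)..x, Lker ε lam x y ^ 2)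

/-- `α₁ = 3L̃²∫₀¹(εk''(y) + εk(1)k(y) + λk(y))² dy + 6(εqk(1) + εk'(1))²∫₀¹L(1,y)²dy`. -/
def alpha1 (ε lam q : ℝ) : ℝ :=
  3 * Ltilde ε lam ^ 2 *
      (∫ y in (0:ℝ)..1,
        (ε * deriv (deriv (fun z => kfun ε lam q z)) y
          + ε * kfun ε lam q 1 * kfun ε lam q y + lam * kfun ε lam q y) ^ 2)
    + 6 * (ε * q * kfun ε lam q 1 + ε * deriv (fun z => kfun ε lam q z) 1) ^ 2
        * ∫ y in (0:ℝ)..1, Lker ε lam 1 y ^ 2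

/-- `α₂ = 6(εqk(1) + εk'(1))²`. -/
def alpha2 (ε lam q : ℝ) : ℝ :=
  6 * (ε * q * kfun ε lam q 1 + ε * deriv (fun z => kfun ε lam q z) 1) ^ 2

/-- `α₃ = 6(λk(1)/2 + ∫₀¹ k(y)p₁(y)dy)²`. -/
def alpha3 (ε lam q : ℝ) : ℝ :=
  6 * (lam * kfun ε lam q 1 / 2
    + ∫ y in (0:ℝ)..1, kfun ε lam q y * p1fun ε lam q y) ^ 2

/-- Lemma 1, ETC: along the event-triggered closed loop, for every
`t ∈ [0, F)` — where `F` is the supremum of the event times, i.e. `t < F` iff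
`t < t_j` for some `j` — the triggering condition is never violated:
`d(t)² ≤ -γ m(t)` and `m(t) < 0`. -/
theorem event_trigger_invariant
    (ε lam q η γ ρ β₁ β₂ β₃ : ℝ)
    (hε : 0 < ε) (hlam : 0 < lam) (hq : lam / (2 * ε) < q)
    (hη : 0 < η) (hγ : 0 < γ) (hρ : 0 < ρ)
    (hβ₁ : 0 < β₁) (hβ₂ : 0 < β₂) (hβ₃ : 0 < β₃)
    (tseq : ℕ → ℝ) (u uh : ℝ → ℝ → ℝ) (d m : ℝ → ℝ) (wh wt : ℝ → ℝ → ℝ)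
    (hloop : EventTriggeredLoop ε lam q η γ ρ β₁ β₂ β₃ tseq u uh d m wh wt) :
    ∀ t : ℝ, 0 ≤ t → (∃ j : ℕ, t < tseq j) →
      d t ^ 2 ≤ -γ * m t ∧ m t < 0 := by
  classical
  obtain ⟨hsol, hd, hwh, hwt, hmcont, hm0, hmode, ht0, hmono, htrig⟩ := hloop
  set c : ℝ := η + ρ * γ with hc
  -- the triggering rule is never violated strictly inside an interval
  have hopen : ∀ j : ℕ, ∀ t ∈ Set.Ioo (tseq j) (tseq (j + 1)),
      d t ^ 2 ≤ -γ * m t := by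
    intro j t ht
    by_contra h
    push_neg at h
    have hmem : t ∈ {s : ℝ | tseq j < s ∧ d s ^ 2 > -γ * m s} := ⟨ht.1, h⟩
    have hbdd : BddBelow {s : ℝ | tseq j < s ∧ d s ^ 2 > -γ * m s} :=
      ⟨tseq j, fun s hs => hs.1.le⟩
    have hle := csInf_le hbdd hmem
    rw [← (htrig j).2] at hle
    exact absurd ht.2 (not_lt.mpr hle)
  -- negativity of m propagates across an interval
  have hstep : ∀ j : ℕ, m (tseq j) < 0 →
      ∀ t ∈ Set.Icc (tseq j) (tseq (j + 1)), m t < 0 := by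
    intro j hmj t ht
    set a := tseq j with ha
    set b := tseq (j + 1) with hb
    set φ : ℝ → ℝ := fun s => m s * Real.exp (c * s) with hφ
    have hφanti : AntitoneOn φ (Set.Icc a b) := by
      apply antitoneOn_of_deriv_nonpos (convex_Icc a b)
      · exact (hmcont.mul (Real.continuous_exp.comp
          (continuous_const.mul continuous_id))).continuousOn
      · intro s hs
        rw [interior_Icc] at hs
        have hm' := hmode j s hs
        have hE : HasDerivAt (fun s : ℝ => Real.exp (c * s))
            (Real.exp (c * s) * c) s := by
          simpa using ((hasDerivAt_id s).const_mul c).exp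
        exact (hm'.mul hE).differentiableAt.differentiableWithinAt
      · intro s hs
        rw [interior_Icc] at hs
        have hm' := hmode j s hs
        have hE : HasDerivAt (fun s : ℝ => Real.exp (c * s))
            (Real.exp (c * s) * c) s := by
          simpa using ((hasDerivAt_id s).const_mul c).exp
        have hder : deriv φ s = _ := (hm'.mul hE).deriv
        rw [hder]
        have hds : d s ^ 2 ≤ -γ * m s := hopen j s hs
        have h1 : (0:ℝ) ≤ L2norm (fun x => wh x s) ^ 2 := sq_nonneg _
        have h2 : (0:ℝ) ≤ wh 1 s ^ 2 := sq_nonneg _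
        have h3 : (0:ℝ) ≤ wt 1 s ^ 2 := sq_nonneg _
        have hbr : (-η * m s + ρ * d s ^ 2 - β₁ * L2norm (fun x => wh x s) ^ 2
            - β₂ * wh 1 s ^ 2 - β₃ * wt 1 s ^ 2) + c * m s ≤ 0 := by
          have := mul_le_mul_of_nonneg_left hds hρ.le
          rw [hc]
          nlinarith [mul_nonneg hβ₁.le h1, mul_nonneg hβ₂.le h2,
            mul_nonneg hβ₃.le h3]
        have hE0 : (0:ℝ) < Real.exp (c * s) := Real.exp_pos _
        nlinarith [mul_nonpos_of_nonpos_of_nonneg hbr hE0.le]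
    have hab : a ≤ b := (hmono (Nat.lt_succ_self j)).le
    have haI : a ∈ Set.Icc a b := ⟨le_refl a, hab⟩
    have hφt : φ t ≤ φ a := hφanti haI ht ht.1
    have hφa : φ a < 0 :=
      mul_neg_of_neg_of_pos hmj (Real.exp_pos _)
    have hφtneg : m t * Real.exp (c * t) < 0 := lt_of_le_of_lt hφt hφa
    nlinarith [Real.exp_pos (c * t)]
  -- m is negative at every event time
  have hmev : ∀ j : ℕ, m (tseq j) < 0 := by
    intro j
    induction j with
    | zero => rw [ht0]; exact hm0
    | succ n ih =>
      exact hstep n ih (tseq (n + 1)) ⟨(hmono (Nat.lt_succ_self n)).le, le_refl _⟩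
  -- the invariant on each half-open interval
  have hmain : ∀ j : ℕ, ∀ t ∈ Set.Ico (tseq j) (tseq (j + 1)),
      d t ^ 2 ≤ -γ * m t ∧ m t < 0 := by
    intro j t ht
    have hmt : m t < 0 := hstep j (hmev j) t ⟨ht.1, ht.2.le⟩
    refine ⟨?_, hmt⟩
    rcases eq_or_lt_of_le ht.1 with heq | hlt
    · have hd0 : d t = 0 := by
        have := hd j t ht
        rw [this, ← heq]
        simp
      rw [hd0]
      nlinarith
    · exact hopen j t ⟨hlt, ht.2⟩
  -- locate the interval containing t
  intro t ht0' hex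
  have hP : ∃ i : ℕ, t < tseq i := hex
  let j₁ := Nat.find hP
  have hj₁ : t < tseq j₁ := Nat.find_spec hP
  have hj₁pos : j₁ ≠ 0 := by
    intro h0
    have : t < tseq 0 := h0 ▸ hj₁
    rw [ht0] at this
    exact absurd ht0' (not_le.mpr this)
  obtain ⟨j₀, hj₀⟩ := Nat.exists_eq_succ_of_ne_zero hj₁pos
  have hnot : ¬ t < tseq j₀ := Nat.find_min hP (by omega)
  push_neg at hnot
  exact hmain j₀ t ⟨hnot, by rw [← Nat.succ_eq_add_one, ← hj₀]; exact hj₁⟩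

end
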